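/- Let N ≥ 1, let λ : {1,…,N} → ℝ, and set S⁺ = {i : λ_i ≥ 0} and S⁻ = {i : λ_i < 0}. For every z in the standard simplex Δ one has Σ_{i∈S⁺} F(z)_i = (Σ_{i∈S⁺} λ_i(1−z_i)z_i)·(1 − Σ_{i∈S⁺} z_i) − (Σ_{i∈S⁻} λ_i(1−z_i)z_i)·(Σ_{i∈S⁺} z_i) ≥ 0; in other words, the Lyapunov function V₁(z) = 1 − Σ_{i∈S⁺} z_i is nonincreasing along the invader-driven replicator flow. -/
import Mathlib


/-- For the invader-driven replicator vector field
`F(z)_i = z_i (λ_i (1 - z_i) - Q(z))` with `Q(z) = Σ_j λ_j (1 - z_j) z_j`,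
and `S⁺ = {i : λ_i ≥ 0}`, `S⁻ = {i : λ_i < 0}`, for every `z` in the simplex:
`Σ_{i∈S⁺} F(z)_i = (Σ_{i∈S⁺} λ_i(1-z_i)z_i)(1 - Σ_{i∈S⁺} z_i)
  - (Σ_{i∈S⁻} λ_i(1-z_i)z_i)(Σ_{i∈S⁺} z_i) ≥ 0`,
i.e. `V₁(z) = 1 - Σ_{i∈S⁺} z_i` is nonincreasing along the flow. -/
theorem stmt_1 (N : ℕ) (hN : 1 ≤ N) (lam : Fin N → ℝ)
    (z : Fin N → ℝ) (hnonneg : ∀ i, 0 ≤ z i) (hsum : ∑ i, z i = 1) :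
    (∑ i ∈ Finset.univ.filter (fun i => 0 ≤ lam i),
        z i * (lam i * (1 - z i) - ∑ j, lam j * (1 - z j) * z j))
      = (∑ i ∈ Finset.univ.filter (fun i => 0 ≤ lam i), lam i * (1 - z i) * z i) *
          (1 - ∑ i ∈ Finset.univ.filter (fun i => 0 ≤ lam i), z i)
        - (∑ i ∈ Finset.univ.filter (fun i => lam i < 0), lam i * (1 - z i) * z i) *
          (∑ i ∈ Finset.univ.filter (fun i => 0 ≤ lam i), z i)
    ∧ 0 ≤ ∑ i ∈ Finset.univ.filter (fun i => 0 ≤ lam i),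
        z i * (lam i * (1 - z i) - ∑ j, lam j * (1 - z j) * z j) := by
  classical
  set P := Finset.univ.filter (fun i => 0 ≤ lam i) with hP
  set Nn := Finset.univ.filter (fun i => lam i < 0) with hNn
  have hz1 : ∀ i, z i ≤ 1 := by
    intro i
    calc z i ≤ ∑ j, z j := Finset.single_le_sum (fun j _ => hnonneg j) (Finset.mem_univ i)
    _ = 1 := hsum
  set Q : ℝ := ∑ j, lam j * (1 - z j) * z j with hQ
  have hsplit : Q = (∑ i ∈ P, lam i * (1 - z i) * z i) + (∑ i ∈ Nn, lam i * (1 - z i) * z i) := by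
    rw [hQ, hP, hNn, ← Finset.sum_filter_add_sum_filter_not Finset.univ (fun i => 0 ≤ lam i)]
    congr 1
    apply Finset.sum_congr _ (fun _ _ => rfl)
    ext i; simp [not_le]
  have hsP : (0:ℝ) ≤ ∑ i ∈ P, z i := Finset.sum_nonneg fun i _ => hnonneg i
  have hsP1 : (∑ i ∈ P, z i) ≤ 1 := by
    rw [← hsum]; exact Finset.sum_le_sum_of_subset_of_nonneg (Finset.filter_subset _ _)
      (fun i _ _ => hnonneg i)
  have heq : (∑ i ∈ P, z i * (lam i * (1 - z i) - Q))
      = (∑ i ∈ P, lam i * (1 - z i) * z i) * (1 - ∑ i ∈ P, z i)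
        - (∑ i ∈ Nn, lam i * (1 - z i) * z i) * (∑ i ∈ P, z i) := by
    have h1 : (∑ i ∈ P, z i * (lam i * (1 - z i) - Q))
        = (∑ i ∈ P, lam i * (1 - z i) * z i) - Q * (∑ i ∈ P, z i) := by
      rw [Finset.mul_sum, ← Finset.sum_sub_distrib]
      exact Finset.sum_congr rfl fun i _ => by ring
    rw [h1, hsplit]; ring
  refine ⟨heq, ?_⟩
  rw [heq]
  have hGP : 0 ≤ ∑ i ∈ P, lam i * (1 - z i) * z i :=
    Finset.sum_nonneg fun i hi => by
      have h1 : 0 ≤ lam i := (Finset.mem_filter.mp hi).2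
      have h2 := hz1 i; have h3 := hnonneg i
      have : 0 ≤ 1 - z i := by linarith
      positivity
  have hGN : (∑ i ∈ Nn, lam i * (1 - z i) * z i) ≤ 0 :=
    Finset.sum_nonpos fun i hi => by
      have h1 : lam i < 0 := (Finset.mem_filter.mp hi).2
      have h2 := hz1 i; have h3 := hnonneg i
      have : 0 ≤ (1 - z i) * z i := by nlinarith
      nlinarith
  nlinarith [mul_nonneg hGP (sub_nonneg.mpr hsP1), mul_nonpos_of_nonpos_of_nonneg hGN hsP]
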